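/- Let k be a field of characteristic zero in which the equation a² + b² = −1 has no solution with a, b ∈ k. Then there is no injective group homomorphism from the alternating group A₄ into PGL₂(k). -/

import Mathlib

/-- `PGL n k` is the projective general linear group: the quotient of `GL n k`
by its center (the subgroup of nonzero scalar matrices). -/
abbrev PGL (n : ℕ) (k : Type*) [Field k] : Type _ :=
  GL (Fin n) k ⧸ Subgroup.center (GL (Fin n) k)

section perms
open Equiv Equiv.Perm

private def pX : Equiv.Perm (Fin 4) := c[0,1] * c[2,3]
private def pY : Equiv.Perm (Fin 4) := c[0,2] * c[1,3]
private def pS : Equiv.Perm (Fin 4) := c[0,1,2]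

private lemma hpX : pX ∈ alternatingGroup (Fin 4) := by
  rw [Equiv.Perm.mem_alternatingGroup]; decide
private lemma hpY : pY ∈ alternatingGroup (Fin 4) := by
  rw [Equiv.Perm.mem_alternatingGroup]; decide
private lemma hpS : pS ∈ alternatingGroup (Fin 4) := by
  rw [Equiv.Perm.mem_alternatingGroup]; decide

end perms


section helpers

variable {k : Type*} [Field k]

private lemma center_scalar (g : GL (Fin 2) k)
    (hg : g ∈ Subgroup.center (GL (Fin 2) k)) :
    ∃ t : k, t ≠ 0 ∧ (g : Matrix (Fin 2) (Fin 2) k) = t • 1 := by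
  rw [Subgroup.mem_center_iff] at hg
  have hdU : Matrix.det (!![1,1;0,1] : Matrix (Fin 2) (Fin 2) k) ≠ 0 := by
    simp [Matrix.det_fin_two]
  have hdL : Matrix.det (!![1,0;1,1] : Matrix (Fin 2) (Fin 2) k) ≠ 0 := by
    simp [Matrix.det_fin_two]
  have hU := congrArg Units.val (hg (Matrix.GeneralLinearGroup.mkOfDetNeZero _ hdU))
  have hL := congrArg Units.val (hg (Matrix.GeneralLinearGroup.mkOfDetNeZero _ hdL))
  have hUv : ((Matrix.GeneralLinearGroup.mkOfDetNeZero _ hdU : GL (Fin 2) k) :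
      Matrix (Fin 2) (Fin 2) k) = !![1,1;0,1] := rfl
  have hLv : ((Matrix.GeneralLinearGroup.mkOfDetNeZero _ hdL : GL (Fin 2) k) :
      Matrix (Fin 2) (Fin 2) k) = !![1,0;1,1] := rfl
  rw [Units.val_mul, Units.val_mul, hUv] at hU
  rw [Units.val_mul, Units.val_mul, hLv] at hL
  set M : Matrix (Fin 2) (Fin 2) k := (g : Matrix (Fin 2) (Fin 2) k) with hM
  have e1 := congrFun (congrFun hU 0) 0
  have e2 := congrFun (congrFun hU 0) 1
  have e3 := congrFun (congrFun hL 0) 0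
  simp [Matrix.mul_apply, Fin.sum_univ_two] at e1 e2 e3
  refine ⟨M 0 0, ?_, ?_⟩
  · intro h0
    have hinv := g.mul_inv
    have := congrFun (congrFun hinv 0) 0
    simp [Matrix.mul_apply, Fin.sum_univ_two, ← hM] at this
    rw [h0, e3] at this
    simp at this
  · ext i j
    fin_cases i <;> fin_cases j <;>
      simp [Matrix.one_apply, e1, e3]
    linear_combination e2

private lemma scalar_central (g : GL (Fin 2) k) (t : k)
    (h : (g : Matrix (Fin 2) (Fin 2) k) = t • 1) :
    g ∈ Subgroup.center (GL (Fin 2) k) := by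
  rw [Subgroup.mem_center_iff]
  intro g'
  ext1
  rw [Units.val_mul, Units.val_mul, h]
  simp [mul_smul_comm, smul_mul_assoc]

private lemma smul_one_eq {s t : k} (h : s • (1 : Matrix (Fin 2) (Fin 2) k) = t • 1) :
    s = t := by
  have := congrFun (congrFun h 0) 0
  simpa using this

private lemma sq_scalar_entries (M : Matrix (Fin 2) (Fin 2) k) (lam : k) (hl : lam ≠ 0)
    (hsq : M * M = lam • 1) (hns : ∀ t : k, M ≠ t • 1) :
    M 1 1 = - M 0 0 ∧ M 0 0 * M 0 0 + M 0 1 * M 1 0 = lam := by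
  have e00 := congrFun (congrFun hsq 0) 0
  have e01 := congrFun (congrFun hsq 0) 1
  have e10 := congrFun (congrFun hsq 1) 0
  have e11 := congrFun (congrFun hsq 1) 1
  simp [Matrix.mul_apply, Fin.sum_univ_two, Matrix.one_apply] at e00 e01 e10 e11
  by_cases hsum : M 0 0 + M 1 1 = 0
  · exact ⟨by linear_combination hsum, e00⟩
  · exfalso
    have hb : M 0 1 = 0 := by
      rcases mul_eq_zero.mp (show M 0 1 * (M 0 0 + M 1 1) = 0 by linear_combination e01)
        with h' | h'
      · exact h'
      · exact absurd h' hsum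
    have hc : M 1 0 = 0 := by
      rcases mul_eq_zero.mp (show M 1 0 * (M 0 0 + M 1 1) = 0 by linear_combination e10)
        with h' | h'
      · exact h'
      · exact absurd h' hsum
    have had : M 0 0 = M 1 1 := by
      rcases mul_eq_zero.mp (show (M 0 0 - M 1 1) * (M 0 0 + M 1 1) = 0 by
        rw [hb] at e00; rw [hb] at e11; ring_nf; linear_combination e00 - e11)
        with h' | h'
      · linear_combination h'
      · exact absurd h' hsum
    apply hns (M 0 0)
    ext i j
    fin_cases i <;> fin_cases j <;> simp [Matrix.one_apply, hb, hc, ← had]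

end helpers

private lemma central_sq {G : Type*} [Group G] (u z : G) (hz : z ∈ Subgroup.center G) :
    (u*z)*(u*z) = u*u*(z*z) := by
  have h := Subgroup.mem_center_iff.mp hz u
  calc (u*z)*(u*z) = u*((z*u)*z) := by group
    _ = u*((u*z)*z) := by rw [← h]
    _ = u*u*(z*z) := by group

set_option maxHeartbeats 1600000 in
/-- Let `k` be a field of characteristic zero in which `a² + b² = −1` has no solution.
Then there is no injective group homomorphism from the alternating group `A₄` into
`PGL₂(k)`. -/
theorem stmt_3 (k : Type*) [Field k] [CharZero k]
    (h : ¬ ∃ a b : k, a ^ 2 + b ^ 2 = -1) :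
    ¬ ∃ f : alternatingGroup (Fin 4) →* PGL 2 k, Function.Injective f := by
  rintro ⟨f, hf⟩
  set X : alternatingGroup (Fin 4) := ⟨pX, hpX⟩ with hXdef
  set Y : alternatingGroup (Fin 4) := ⟨pY, hpY⟩ with hYdef
  set W : alternatingGroup (Fin 4) := ⟨pS, hpS⟩ with hWdef
  have hXX : X * X = 1 := Subtype.ext (by decide : pX * pX = 1)
  have hYY : Y * Y = 1 := Subtype.ext (by decide : pY * pY = 1)
  have hXY : X * Y = Y * X := Subtype.ext (by decide : pX * pY = pY * pX)
  have hWX : W * X * W⁻¹ = X * Y := Subtype.ext (by decide : pS * pX * pS⁻¹ = pX * pY)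
  have hWXY : W * (X * Y) * W⁻¹ = Y := Subtype.ext (by decide : pS * (pX * pY) * pS⁻¹ = pY)
  have hX1 : X ≠ 1 := fun hh => by
    have := congrArg Subtype.val hh; exact absurd this (by decide)
  have hY1 : Y ≠ 1 := fun hh => by
    have := congrArg Subtype.val hh; exact absurd this (by decide)
  have hXneY : X ≠ Y := fun hh => by
    have := congrArg Subtype.val hh; exact absurd this (by decide)
  -- the quotient map
  set φ : GL (Fin 2) k →* PGL 2 k :=
    QuotientGroup.mk' (Subgroup.center (GL (Fin 2) k)) with hφdef
  obtain ⟨A, hA⟩ := QuotientGroup.mk'_surjective (Subgroup.center (GL (Fin 2) k)) (f X)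
  obtain ⟨B, hB⟩ := QuotientGroup.mk'_surjective (Subgroup.center (GL (Fin 2) k)) (f Y)
  obtain ⟨S, hS⟩ := QuotientGroup.mk'_surjective (Subgroup.center (GL (Fin 2) k)) (f W)
  have ker_center : ∀ g : GL (Fin 2) k, φ g = 1 → g ∈ Subgroup.center (GL (Fin 2) k) :=
    fun g hg => (QuotientGroup.eq_one_iff g).mp hg
  -- A*A is central
  have hzA : A * A ∈ Subgroup.center (GL (Fin 2) k) := by
    apply ker_center
    rw [map_mul, hA, ← map_mul, hXX, map_one]
  have hzB : B * B ∈ Subgroup.center (GL (Fin 2) k) := by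
    apply ker_center
    rw [map_mul, hB, ← map_mul, hYY, map_one]
  -- the commutator w
  obtain ⟨w, hwdef⟩ : ∃ w : GL (Fin 2) k, w = (B*A)⁻¹ * (A*B) := ⟨_, rfl⟩
  have hzw : w ∈ Subgroup.center (GL (Fin 2) k) := by
    apply ker_center
    rw [hwdef, map_mul, map_inv, map_mul, map_mul, hA, hB, ← map_mul, ← map_mul, hXY,
      inv_mul_cancel]
  obtain ⟨z₁, hz₁def⟩ : ∃ z : GL (Fin 2) k, z = (A*B)⁻¹ * (S*A*S⁻¹) := ⟨_, rfl⟩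
  have hzz₁ : z₁ ∈ Subgroup.center (GL (Fin 2) k) := by
    apply ker_center
    rw [hz₁def]
    simp only [hφdef, map_mul, map_inv, hA, hB, hS]
    rw [← map_inv f W, ← map_mul, ← map_mul, ← map_mul, hWX, ← map_inv, ← map_mul,
      inv_mul_cancel, map_one]
  obtain ⟨z₂, hz₂def⟩ : ∃ z : GL (Fin 2) k, z = B⁻¹ * (S*(A*B)*S⁻¹) := ⟨_, rfl⟩
  have hzz₂ : z₂ ∈ Subgroup.center (GL (Fin 2) k) := by
    apply ker_center
    rw [hz₂def]
    simp only [hφdef, map_mul, map_inv, hA, hB, hS]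
    rw [← map_inv f W, ← map_mul, ← map_mul, ← map_mul, hWXY, ← map_inv, ← map_mul,
      inv_mul_cancel, map_one]
  have comm : ∀ z : GL (Fin 2) k, z ∈ Subgroup.center (GL (Fin 2) k) →
      ∀ g : GL (Fin 2) k, g * z = z * g :=
    fun z hz g => Subgroup.mem_center_iff.mp hz g
  have hBAw : (B*A) * w = A*B := by rw [hwdef]; group
  have hSA : S*A*S⁻¹ = (A*B) * z₁ := by rw [hz₁def]; group
  have hSAB : S*(A*B)*S⁻¹ = B * z₂ := by rw [hz₂def]; group
  have c1 : S*(A*A)*S⁻¹ = A*A := by rw [comm _ hzA S]; group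
  have E1 : A*A = (A*B)*(A*B)*(z₁*z₁) := by
    rw [← c1, show S*(A*A)*S⁻¹ = (S*A*S⁻¹)*(S*A*S⁻¹) by group, hSA, central_sq _ _ hzz₁]
  have E2 : (A*B)*(A*B)*w = (A*A)*(B*B) := by
    calc (A*B)*(A*B)*w = A*((B*A)*(B*w)) := by group
      _ = A*((B*A)*(w*B)) := by rw [comm _ hzw B]
      _ = A*(((B*A)*w)*B) := by group
      _ = A*((A*B)*B) := by rw [hBAw]
      _ = (A*A)*(B*B) := by group
  have R3 : w * w = 1 := by
    have t1 : ((A*A)*B)*1 = ((A*A)*B)*(w*w) := by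
      calc ((A*A)*B)*1 = A*(A*B) := by group
        _ = A*((B*A)*w) := by rw [hBAw]
        _ = ((A*B)*A)*w := by group
        _ = (((B*A)*w)*A)*w := by rw [hBAw]
        _ = (B*A)*((w*A)*w) := by group
        _ = (B*A)*((A*w)*w) := by rw [comm _ hzw A]
        _ = (B*(A*A))*(w*w) := by group
        _ = ((A*A)*B)*(w*w) := by rw [comm _ hzA B]
    exact (mul_left_cancel t1).symm
  have R1 : w = (B*B)*(z₁*z₁) := by
    have t2 : (A*A)*w = (A*A)*((B*B)*(z₁*z₁)) := by
      calc (A*A)*w = ((A*B)*(A*B)*(z₁*z₁))*w := by rw [← E1]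
        _ = ((A*B)*(A*B))*((z₁*z₁)*w) := by group
        _ = ((A*B)*(A*B))*(w*(z₁*z₁)) := by rw [comm _ hzw (z₁*z₁)]
        _ = ((A*B)*(A*B)*w)*(z₁*z₁) := by group
        _ = ((A*A)*(B*B))*(z₁*z₁) := by rw [E2]
        _ = (A*A)*((B*B)*(z₁*z₁)) := by group
    exact mul_left_cancel t2
  have hP : (A*B)*(A*B) ∈ Subgroup.center (GL (Fin 2) k) := by
    have hPe : (A*B)*(A*B) = ((A*A)*(B*B))*w⁻¹ := by rw [← E2]; group
    rw [hPe]
    exact Subgroup.mul_mem _ (Subgroup.mul_mem _ hzA hzB) (Subgroup.inv_mem _ hzw)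
  have R2 : A*A = w*(z₂*z₂) := by
    have c2 : S*((A*B)*(A*B))*S⁻¹ = (A*B)*(A*B) := by rw [comm _ hP S]; group
    have t3 : (A*B)*(A*B) = (B*B)*(z₂*z₂) := by
      rw [← c2, show S*((A*B)*(A*B))*S⁻¹ = (S*(A*B)*S⁻¹)*(S*(A*B)*S⁻¹) by group, hSAB,
        central_sq _ _ hzz₂]
    have t4 : (B*B)*((z₂*z₂)*w) = (B*B)*(A*A) := by
      calc (B*B)*((z₂*z₂)*w) = ((B*B)*(z₂*z₂))*w := by group
        _ = (A*B)*(A*B)*w := by rw [← t3]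
        _ = (A*A)*(B*B) := E2
        _ = (B*B)*(A*A) := by rw [comm _ hzB (A*A)]
    have t5 := mul_left_cancel t4
    rw [← t5]
    exact comm _ hzw (z₂*z₂)
  -- pass to scalars
  obtain ⟨lam, hlam0, hlamv⟩ := center_scalar _ hzA
  obtain ⟨mu, hmu0, hmuv⟩ := center_scalar _ hzB
  obtain ⟨ee, hee0, heev⟩ := center_scalar _ hzw
  obtain ⟨dd, hdd0, hddv⟩ := center_scalar _ hzz₁
  obtain ⟨cc, hcc0, hccv⟩ := center_scalar _ hzz₂
  rw [Units.val_mul] at hlamv hmuv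
  have hee2 : ee * ee = 1 := by
    have hv := congrArg Units.val R3
    simp only [Units.val_mul, Units.val_one] at hv
    rw [heev, smul_mul_smul_comm, mul_one] at hv
    exact smul_one_eq (hv.trans (one_smul k (1 : Matrix (Fin 2) (Fin 2) k)).symm)
  have hmud : ee = mu * (dd * dd) := by
    have hv := congrArg Units.val R1
    simp only [Units.val_mul] at hv
    rw [heev, hddv, hmuv, smul_mul_smul_comm, smul_mul_smul_comm, mul_one, mul_one] at hv
    exact smul_one_eq hv
  have hlamc : lam = ee * (cc * cc) := by
    have hv := congrArg Units.val R2
    simp only [Units.val_mul] at hv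
    rw [heev, hccv, hlamv, smul_mul_smul_comm, smul_mul_smul_comm, mul_one, mul_one] at hv
    exact smul_one_eq hv
  -- nonscalarity of A and B
  have hfner : ∀ (U : GL (Fin 2) k) (V : alternatingGroup (Fin 4)), φ U = f V → V ≠ 1 →
      ∀ t : k, (U : Matrix (Fin 2) (Fin 2) k) ≠ t • 1 := by
    intro U V hU hV t ht
    apply hV
    apply hf
    rw [← hU, map_one]
    exact (QuotientGroup.eq_one_iff U).mpr (scalar_central U t ht)
  have hAns := hfner A X hA hX1
  have hBns := hfner B Y hB hY1
  obtain ⟨hA11, hAe⟩ := sq_scalar_entries _ lam hlam0 hlamv hAns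
  obtain ⟨hB11, hBe⟩ := sq_scalar_entries _ mu hmu0 hmuv hBns
  have habm : (A : Matrix (Fin 2) (Fin 2) k) * (B : Matrix (Fin 2) (Fin 2) k)
      = ((B : Matrix (Fin 2) (Fin 2) k) * (A : Matrix (Fin 2) (Fin 2) k)) * (ee • 1) := by
    have hv := congrArg Units.val hBAw
    simp only [Units.val_mul] at hv
    rw [heev] at hv
    exact hv.symm
  rcases mul_self_eq_one_iff.mp hee2 with hee1 | heem1
  · -- commuting case : A and B are proportional, contradiction
    have hcomm : (A : Matrix (Fin 2) (Fin 2) k) * (B : Matrix (Fin 2) (Fin 2) k)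
        = (B : Matrix (Fin 2) (Fin 2) k) * (A : Matrix (Fin 2) (Fin 2) k) := by
      rw [habm, hee1, one_smul, mul_one]
    have m00 := congrFun (congrFun hcomm 0) 0
    have m01 := congrFun (congrFun hcomm 0) 1
    have m10 := congrFun (congrFun hcomm 1) 0
    simp only [Matrix.mul_apply, Fin.sum_univ_two] at m00 m01 m10
    rw [hA11, hB11] at m01 m10
    have mbr : A.val 0 1 * B.val 1 0 = B.val 0 1 * A.val 1 0 := by
      linear_combination m00
    have maq : A.val 0 0 * B.val 0 1 = A.val 0 1 * B.val 0 0 := by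
      linear_combination m01 / 2
    have mcp : A.val 1 0 * B.val 0 0 = A.val 0 0 * B.val 1 0 := by
      linear_combination m10 / 2
    have hprop : ∃ t : k, B.val = t • A.val := by
      by_cases ha0 : A.val 0 0 = 0
      · by_cases hb0 : A.val 0 1 = 0
        · have hc0 : A.val 1 0 ≠ 0 := by
            intro hc0
            apply hlam0
            rw [← hAe, ha0, hc0]; ring
          refine ⟨B.val 1 0 / A.val 1 0, ?_⟩
          have hp0 : B.val 0 0 = 0 := by
            rcases mul_eq_zero.mp (show A.val 1 0 * B.val 0 0 = 0 by
              rw [ha0] at mcp; linear_combination mcp) with h' | h'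
            · exact absurd h' hc0
            · exact h'
          have hq0 : B.val 0 1 = 0 := by
            rcases mul_eq_zero.mp (show B.val 0 1 * A.val 1 0 = 0 by
              rw [hb0] at mbr; linear_combination -mbr) with h' | h'
            · exact h'
            · exact absurd h' hc0
          ext i j
          fin_cases i <;> fin_cases j <;>
            simp only [Matrix.smul_apply, smul_eq_mul, Fin.isValue, Fin.mk_zero, Fin.mk_one]
          · rw [hp0, ha0]; ring
          · rw [hq0, hb0]; ring
          · field_simp
          · rw [hB11, hA11, hp0, ha0]; ring
        · refine ⟨B.val 0 1 / A.val 0 1, ?_⟩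
          ext i j
          fin_cases i <;> fin_cases j <;>
            simp only [Matrix.smul_apply, smul_eq_mul, Fin.isValue, Fin.mk_zero, Fin.mk_one]
          · field_simp; linear_combination -maq
          · field_simp
          · field_simp; linear_combination mbr
          · rw [hB11, hA11]; field_simp; linear_combination maq
      · refine ⟨B.val 0 0 / A.val 0 0, ?_⟩
        ext i j
        fin_cases i <;> fin_cases j <;>
          simp only [Matrix.smul_apply, smul_eq_mul, Fin.isValue, Fin.mk_zero, Fin.mk_one]
        · field_simp
        · field_simp; linear_combination maq
        · field_simp; linear_combination -mcp
        · rw [hB11, hA11]; field_simp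
    obtain ⟨t, hBt⟩ := hprop
    have : φ (A⁻¹ * B) = 1 := by
      refine (QuotientGroup.eq_one_iff _).mpr (scalar_central _ t ?_)
      rw [Units.val_mul, hBt, mul_smul_comm, ← Units.val_mul, inv_mul_cancel, Units.val_one]
    have hfxy : (f X)⁻¹ * f Y = 1 := by
      rw [← hA, ← hB, ← map_inv, ← map_mul]; exact this
    exact hXneY (hf (inv_mul_eq_one.mp hfxy))
  · -- anticommuting case : -1 is a sum of two squares
    have hanti : (A : Matrix (Fin 2) (Fin 2) k) * (B : Matrix (Fin 2) (Fin 2) k)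
        = -((B : Matrix (Fin 2) (Fin 2) k) * (A : Matrix (Fin 2) (Fin 2) k)) := by
      rw [habm, heem1]; simp
    have n00 := congrFun (congrFun hanti 0) 0
    simp only [Matrix.mul_apply, Fin.sum_univ_two, Matrix.neg_apply] at n00
    rw [heem1] at hmud hlamc
    -- hmud : -1 = mu * (dd*dd) ; hlamc : lam = -1 * (cc*cc)
    by_cases hc : A.val 1 0 = 0
    · refine h ⟨A.val 0 0 / cc, 0, ?_⟩
      have key : (A.val 0 0)^2 = -(cc^2) := by
        linear_combination hAe + hlamc - A.val 0 1 * hc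
      field_simp [key]
      linear_combination key
    · refine h ⟨(A.val 1 0 * B.val 0 0 - A.val 0 0 * B.val 1 0) * dd / A.val 1 0,
        cc * B.val 1 0 * dd / A.val 1 0, ?_⟩
      have key : ((A.val 1 0 * B.val 0 0 - A.val 0 0 * B.val 1 0) * dd)^2
          + (cc * B.val 1 0 * dd)^2 = -((A.val 1 0)^2) := by
        linear_combination (dd*dd*(A.val 1 0)*(A.val 1 0)) * hBe
          + (dd*dd*(B.val 1 0)*(B.val 1 0)) * hAe
          - (dd*dd*(A.val 1 0)*(B.val 1 0)) * n00
          - ((A.val 1 0)*(A.val 1 0)) * hmud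
          + (dd*dd*(B.val 1 0)*(B.val 1 0)) * hlamc
      rw [div_pow, div_pow, ← add_div, key, neg_div,
        div_self (pow_ne_zero 2 hc)]
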